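/- Let ι : ℝ² \ {0} → ℝ² \ {0} denote inversion in the unit circle, ι(p) = p/‖p‖². Let U ⊆ ℝ² \ {0} be open and connected with ι(U) = U and U ∩ {p : ‖p‖ = 1} ≠ ∅. If u is harmonic on U and u(p) = 0 for every p ∈ U with ‖p‖ = 1, then u(p) = −u(ι(p)) for every p ∈ U. -/

import Mathlib

open Complex

/-- Partial derivative with respect to `x` (real part), identifying `ℝ²` with `ℂ`. -/
noncomputable def pdx (u : ℂ → ℝ) (z : ℂ) : ℝ :=
  deriv (fun t : ℝ => u ((t : ℂ) + (z.im : ℂ) * Complex.I)) z.re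

/-- Partial derivative with respect to `y` (imaginary part), identifying `ℝ²` with `ℂ`. -/
noncomputable def pdy (u : ℂ → ℝ) (z : ℂ) : ℝ :=
  deriv (fun t : ℝ => u ((z.re : ℂ) + (t : ℂ) * Complex.I)) z.im

/-- Inversion in the unit circle, `ι(p) = p / ‖p‖²`. -/
noncomputable def circleInv (z : ℂ) : ℂ := z / ((‖z‖ : ℂ)) ^ 2


lemma circleInv_eq (z : ℂ) (hz : z ≠ 0) : circleInv z = (starRingEnd ℂ z)⁻¹ := by
  have h2 : ((‖z‖ : ℂ)) ^ 2 = z * starRingEnd ℂ z := by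
    rw [Complex.mul_conj]
    norm_cast
    rw [Complex.sq_norm]
  rw [circleInv, h2, div_mul_eq_div_div, div_self hz, one_div]

lemma pdx_eq_fderiv {u : ℂ → ℝ} {z : ℂ} (h : DifferentiableAt ℝ u z) :
    pdx u z = fderiv ℝ u z 1 := by
  have hL : HasDerivAt (fun t : ℝ => (t : ℂ) + (z.im : ℂ) * Complex.I) 1 z.re := by
    simpa using (Complex.ofRealCLM.hasDerivAt (x := z.re)).add_const ((z.im : ℂ) * Complex.I)
  have h' : HasFDerivAt u (fderiv ℝ u z) ((z.re : ℂ) + (z.im : ℂ) * Complex.I) := by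
    simpa [Complex.re_add_im] using h.hasFDerivAt
  have := h'.comp_hasDerivAt z.re hL
  exact this.deriv

lemma pdy_eq_fderiv {u : ℂ → ℝ} {z : ℂ} (h : DifferentiableAt ℝ u z) :
    pdy u z = fderiv ℝ u z Complex.I := by
  have hL : HasDerivAt (fun t : ℝ => (z.re : ℂ) + (t : ℂ) * Complex.I) Complex.I z.im := by
    simpa using (((Complex.ofRealCLM.hasDerivAt (x := z.im)).mul_const Complex.I).const_add (z.re : ℂ))
  have h' : HasFDerivAt u (fderiv ℝ u z) ((z.re : ℂ) + (z.im : ℂ) * Complex.I) := by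
    simpa [Complex.re_add_im] using h.hasFDerivAt
  have := h'.comp_hasDerivAt z.im hL
  exact this.deriv

lemma pdx_congr {F F' : ℂ → ℝ} {z : ℂ} (h : F =ᶠ[nhds z] F') : pdx F z = pdx F' z := by
  have hc : Filter.Tendsto (fun t : ℝ => (t : ℂ) + (z.im : ℂ) * Complex.I) (nhds z.re) (nhds z) := by
    have : Continuous (fun t : ℝ => (t : ℂ) + (z.im : ℂ) * Complex.I) := by continuity
    simpa [Complex.re_add_im] using this.tendsto z.re
  exact Filter.EventuallyEq.deriv_eq (h.comp_tendsto hc)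

lemma pdy_congr {F F' : ℂ → ℝ} {z : ℂ} (h : F =ᶠ[nhds z] F') : pdy F z = pdy F' z := by
  have hc : Filter.Tendsto (fun t : ℝ => (z.re : ℂ) + (t : ℂ) * Complex.I) (nhds z.im) (nhds z) := by
    have : Continuous (fun t : ℝ => (z.re : ℂ) + (t : ℂ) * Complex.I) := by continuity
    simpa [Complex.re_add_im] using this.tendsto z.im
  exact Filter.EventuallyEq.deriv_eq (h.comp_tendsto hc)

lemma hasDerivAt_of_real_fderiv {g : ℂ → ℂ} {L : ℂ →L[ℝ] ℂ} {z : ℂ}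
    (h : HasFDerivAt g L z) (hL : ∀ v, L v = v * L 1) : HasDerivAt g (L 1) z := by
  rw [hasDerivAt_iff_isLittleO]
  have h' := h.isLittleO
  have : ∀ w, (w - z) • L 1 = L (w - z) := by
    intro w; rw [hL (w - z), smul_eq_mul]
  refine h'.congr' (by filter_upwards with w; rw [this w]) (by rfl)

/-- Cauchy-Riemann: `pdx u - i pdy u` is complex-differentiable for harmonic `u`. -/
lemma cr_holo {u : ℂ → ℝ} {V : Set ℂ} (hV : IsOpen V) (hu : ContDiffOn ℝ 2 u V)
    (hharm : ∀ z ∈ V, pdx (pdx u) z + pdy (pdy u) z = 0) {z : ℂ} (hz : z ∈ V) :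
    DifferentiableAt ℂ (fun w => (pdx u w : ℂ) - (pdy u w : ℂ) * Complex.I) z := by
  have hVz : V ∈ nhds z := hV.mem_nhds hz
  have hCA : ContDiffAt ℝ 2 u z := (hu z hz).contDiffAt hVz
  have hφ : ContDiffAt ℝ 1 (fderiv ℝ u) z := hCA.fderiv_right (by norm_num)
  have hφd : DifferentiableAt ℝ (fderiv ℝ u) z := hφ.differentiableAt one_ne_zero
  set φ := fderiv ℝ u with hφdef
  set B := fderiv ℝ φ z with hBdef
  -- eventual identification of pdx/pdy with fderiv applications
  have hev : ∀ᶠ y in nhds z, DifferentiableAt ℝ u y := by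
    filter_upwards [hVz] with y hy
    exact ((hu y hy).contDiffAt (hV.mem_nhds hy)).differentiableAt two_ne_zero
  have hevx : (fun y => pdx u y) =ᶠ[nhds z] fun y => φ y 1 := by
    filter_upwards [hev] with y hy; exact pdx_eq_fderiv hy
  have hevy : (fun y => pdy u y) =ᶠ[nhds z] fun y => φ y Complex.I := by
    filter_upwards [hev] with y hy; exact pdy_eq_fderiv hy
  -- second derivative symmetry
  have hsymm : ∀ v w, B v w = B w v := hCA.isSymmSndFDerivAt (by simp)
  -- derivatives of the partials
  have hG1 : HasFDerivAt (fun y => φ y (1:ℂ)) ((ContinuousLinearMap.apply ℝ ℝ (1:ℂ)).comp B) z :=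
    (ContinuousLinearMap.apply ℝ ℝ (1:ℂ)).hasFDerivAt.comp z hφd.hasFDerivAt
  have hGI : HasFDerivAt (fun y => φ y Complex.I) ((ContinuousLinearMap.apply ℝ ℝ Complex.I).comp B) z :=
    (ContinuousLinearMap.apply ℝ ℝ Complex.I).hasFDerivAt.comp z hφd.hasFDerivAt
  -- harmonicity in terms of B
  have hBharm : B 1 1 + B Complex.I Complex.I = 0 := by
    have h1 : pdx (pdx u) z = B 1 1 := by
      rw [pdx_congr hevx, pdx_eq_fderiv hG1.differentiableAt, hG1.fderiv]; rfl
    have h2 : pdy (pdy u) z = B Complex.I Complex.I := by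
      rw [pdy_congr hevy, pdy_eq_fderiv hGI.differentiableAt, hGI.fderiv]; rfl
    rw [← h1, ← h2]; exact hharm z hz
  -- real differentiability of the eventual representative
  have hg : HasFDerivAt (fun y => ((φ y 1 : ℝ) : ℂ) - ((φ y Complex.I : ℝ) : ℂ) * Complex.I)
      ((Complex.ofRealCLM.comp ((ContinuousLinearMap.apply ℝ ℝ (1:ℂ)).comp B)) -
        (Complex.ofRealCLM.comp ((ContinuousLinearMap.apply ℝ ℝ Complex.I).comp B)).smulRight Complex.I) z := by
    have h1 := Complex.ofRealCLM.hasFDerivAt.comp z hG1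
    have h2 := (Complex.ofRealCLM.hasFDerivAt.comp z hGI)
    have h2' := h2.smul_const Complex.I
    exact h1.sub h2'
  -- complex linearity of the derivative
  set L := ((Complex.ofRealCLM.comp ((ContinuousLinearMap.apply ℝ ℝ (1:ℂ)).comp B)) -
        (Complex.ofRealCLM.comp ((ContinuousLinearMap.apply ℝ ℝ Complex.I).comp B)).smulRight Complex.I) with hLdef
  have hLv : ∀ v, L v = v * L 1 := by
    intro v
    have hv : v = (v.re : ℝ) • (1:ℂ) + (v.im : ℝ) • Complex.I := by
      simp [real_smul, Complex.re_add_im]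
    have hLval : ∀ w, L w = ((B w 1 : ℝ) : ℂ) - ((B w Complex.I : ℝ) : ℂ) * Complex.I := by
      intro w; simp [hLdef, ContinuousLinearMap.smulRight_apply, smul_eq_mul]
    have e1 : B Complex.I (1:ℂ) = B 1 Complex.I := hsymm Complex.I 1
    have e2 : B Complex.I Complex.I = - B 1 1 := by linarith [hBharm]
    rw [hv, map_add, map_smul, map_smul, hLval (1:ℂ), hLval Complex.I, e1, e2]
    rw [Complex.ext_iff]
    push_cast
    constructor <;>
      simp [Complex.mul_re, Complex.mul_im, Complex.add_re, Complex.add_im,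
        Complex.sub_re, Complex.sub_im, Complex.smul_re, Complex.smul_im] <;> ring
  have hgev : (fun w => ((pdx u w : ℝ) : ℂ) - ((pdy u w : ℝ) : ℂ) * Complex.I)
      =ᶠ[nhds z] (fun y => ((φ y 1 : ℝ) : ℂ) - ((φ y Complex.I : ℝ) : ℂ) * Complex.I) := by
    filter_upwards [hevx, hevy] with y h1 h2
    rw [h1, h2]
  rw [Filter.EventuallyEq.differentiableAt_iff hgev]
  exact (hasDerivAt_of_real_fderiv hg hLv).differentiableAt

/-- A holomorphic function on a ball has a primitive there. -/
lemma exists_primitive_ball {g : ℂ → ℂ} {c : ℂ} {r : ℝ} (hr : 0 < r)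
    (hg : DifferentiableOn ℂ g (Metric.ball c r)) :
    ∃ F : ℂ → ℂ, ∀ z ∈ Metric.ball c (r / 2), HasDerivAt F (g z) z := by
  have hr2 : 0 < r / 2 := by linarith
  set R : NNReal := (r / 2).toNNReal with hR
  have hRr : (R : ℝ) = r / 2 := Real.coe_toNNReal _ hr2.le
  have hg' : DifferentiableOn ℂ g (Metric.closedBall c (R : ℝ)) := by
    refine hg.mono ?_
    rw [hRr]
    intro y hy
    rw [Metric.mem_closedBall] at hy
    rw [Metric.mem_ball]
    linarith
  have hps := hg'.hasFPowerSeriesOnBall (by simp [hR, hr2])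
  set p := cauchyPowerSeries g c R with hp
  refine ⟨fun z => ∑' n : ℕ, p.coeff n / (n + 1) * (z - c) ^ (n + 1), ?_⟩
  intro z hz
  set s : ℝ := (dist z c + r / 2) / 2 with hs
  have hzs : dist z c < s := by
    rw [hs]; rw [Metric.mem_ball] at hz; linarith
  have hsr : s < r / 2 := by
    rw [hs]; rw [Metric.mem_ball] at hz; linarith
  have hs0 : 0 < s := lt_of_le_of_lt dist_nonneg hzs
  -- summable bound
  have hrad : (s.toNNReal : ENNReal) < p.radius := by
    refine lt_of_lt_of_le ?_ hps.r_le
    rw [ENNReal.coe_lt_coe, ← NNReal.coe_lt_coe, hRr, Real.coe_toNNReal s hs0.le]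
    exact hsr
  have hsum : Summable (fun n : ℕ => ‖p n‖ * s ^ n) := by
    have := p.summable_norm_mul_pow hrad
    simpa [Real.coe_toNNReal s hs0.le] using this
  have hcoeff : ∀ n : ℕ, ‖p.coeff n‖ ≤ ‖p n‖ := by
    intro n
    have h0 := (p n).le_opNorm (fun _ => (1 : ℂ))
    simp only [norm_one, Finset.prod_const, one_pow, mul_one] at h0
    exact h0
  have hderiv : ∀ (n : ℕ) (y : ℂ),
      HasDerivAt (fun w => p.coeff n / (n + 1) * (w - c) ^ (n + 1))
        (p.coeff n * (y - c) ^ n) y := by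
    intro n y
    have h1 : HasDerivAt (fun w : ℂ => (w - c) ^ (n + 1))
        ((n + 1 : ℕ) * (y - c) ^ n * 1) y := by
      have := ((hasDerivAt_id y).sub_const c).fun_pow (n + 1)
      simpa using this
    have h2 := h1.const_mul (p.coeff n / (n + 1))
    refine h2.congr_deriv ?_
    have hne : ((n : ℂ) + 1) ≠ 0 := Nat.cast_add_one_ne_zero n
    push_cast
    field_simp
  have hbound : ∀ (n : ℕ) (y : ℂ), y ∈ Metric.ball c s →
      ‖p.coeff n * (y - c) ^ n‖ ≤ ‖p n‖ * s ^ n := by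
    intro n y hy
    rw [norm_mul, norm_pow]
    have h1 : ‖y - c‖ ≤ s := by
      rw [Metric.mem_ball, dist_eq_norm] at hy; exact hy.le
    exact mul_le_mul (hcoeff n) (pow_le_pow_left₀ (norm_nonneg _) h1 n)
      (pow_nonneg (norm_nonneg _) n) (norm_nonneg _)
  have hc0 : Summable (fun n : ℕ => p.coeff n / (n + 1) * ((c : ℂ) - c) ^ (n + 1)) := by
    apply summable_of_ne_finset_zero (s := ∅)
    intro n _
    simp
  have key := hasDerivAt_tsum_of_isPreconnected hsum Metric.isOpen_ball
    (convex_ball c s).isPreconnected (fun n y _ => hderiv n y) hbound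
    (Metric.mem_ball_self hs0) hc0 (by rwa [Metric.mem_ball])
  -- identify the sum of derivatives with g z
  have hzR : z - c ∈ Metric.eball (0 : ℂ) (R : ENNReal) := by
    rw [Metric.emetric_ball_nnreal, Metric.mem_ball, dist_zero_right, ← dist_eq_norm, hRr]
    rwa [Metric.mem_ball] at hz
  have hhs := hps.hasSum hzR
  have heq : (fun n : ℕ => p n fun _ => z - c) = fun n => p.coeff n * (z - c) ^ n := by
    funext n
    rw [FormalMultilinearSeries.apply_eq_pow_smul_coeff, smul_eq_mul]
    ring
  rw [heq] at hhs
  have : g (c + (z - c)) = g z := by ring_nf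
  rw [this] at hhs
  rwa [hhs.tsum_eq] at key

/-- Local representation of a harmonic function as the real part of a holomorphic function. -/
lemma local_rep {u : ℂ → ℝ} {V : Set ℂ} (hV : IsOpen V) (hu : ContDiffOn ℝ 2 u V)
    (hharm : ∀ z ∈ V, pdx (pdx u) z + pdy (pdy u) z = 0) {c : ℂ} (hc : c ∈ V) :
    ∃ r > 0, Metric.ball c r ⊆ V ∧ ∃ f : ℂ → ℂ,
      (∀ z ∈ Metric.ball c r, DifferentiableAt ℂ f z) ∧
      (∀ z ∈ Metric.ball c r, u z = (f z).re) := by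
  obtain ⟨r0, hr0, hball⟩ := Metric.isOpen_iff.1 hV c hc
  set g : ℂ → ℂ := fun w => (pdx u w : ℂ) - (pdy u w : ℂ) * Complex.I with hgdef
  have hgd : DifferentiableOn ℂ g (Metric.ball c r0) := fun z hz =>
    (cr_holo hV hu hharm (hball hz)).differentiableWithinAt
  obtain ⟨F, hF⟩ := exists_primitive_ball hr0 hgd
  set r := r0 / 2 with hrdef
  have hr : 0 < r := by positivity
  have hball' : Metric.ball c r ⊆ V := fun z hz =>
    hball (Metric.ball_subset_ball (by linarith) hz)
  -- ψ = u - Re F has zero derivative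
  have hFre : ∀ z ∈ Metric.ball c r, HasFDerivAt (fun w => u w - (F w).re)
      (0 : ℂ →L[ℝ] ℝ) z := by
    intro z hz
    have hzV : z ∈ V := hball' hz
    have hud : DifferentiableAt ℝ u z :=
      ((hu z hzV).contDiffAt (hV.mem_nhds hzV)).differentiableAt two_ne_zero
    have hFz := (hF z hz).hasFDerivAt.restrictScalars ℝ
    have hRe := Complex.reCLM.hasFDerivAt.comp z hFz
    have heq : fderiv ℝ u z =
        Complex.reCLM.comp ((ContinuousLinearMap.smulRight (1 : ℂ →L[ℂ] ℂ) (g z)).restrictScalars ℝ) := by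
      apply ContinuousLinearMap.ext
      intro v
      have hv : v = (v.re : ℝ) • (1:ℂ) + (v.im : ℝ) • Complex.I := by
        simp [real_smul, Complex.re_add_im]
      have h1 : fderiv ℝ u z 1 = pdx u z := (pdx_eq_fderiv hud).symm
      have hI : fderiv ℝ u z Complex.I = pdy u z := (pdy_eq_fderiv hud).symm
      conv_lhs => rw [hv]
      rw [map_add, map_smul, map_smul, h1, hI]
      simp only [ContinuousLinearMap.coe_comp', Function.comp_apply,
        ContinuousLinearMap.coe_restrictScalars', ContinuousLinearMap.smulRight_apply,
        ContinuousLinearMap.one_apply, smul_eq_mul, Complex.reCLM_apply, hgdef]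
      simp [Complex.mul_re, Complex.add_re, Complex.sub_re, Complex.mul_im]
    have := hud.hasFDerivAt.sub hRe
    refine this.congr_fderiv ?_
    rw [heq]
    ext v
    simp
  have hconst : ∀ z ∈ Metric.ball c r, u z - (F z).re = u c - (F c).re := by
    intro z hz
    have hdiff : DifferentiableOn ℝ (fun w => u w - (F w).re) (Metric.ball c r) :=
      fun y hy => ((hFre y hy).differentiableAt).differentiableWithinAt
    refine (convex_ball c r).is_const_of_fderivWithin_eq_zero hdiff ?_ hz (Metric.mem_ball_self hr)
    intro y hy
    rw [fderivWithin_of_isOpen Metric.isOpen_ball hy]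
    exact (hFre y hy).fderiv
  refine ⟨r, hr, hball', fun z => F z + ((u c - (F c).re : ℝ) : ℂ), ?_, ?_⟩
  · intro z hz
    exact ((hF z hz).differentiableAt).add_const _
  · intro z hz
    have := hconst z hz
    simp only [Complex.add_re, Complex.ofReal_re]
    linarith

/-- Conjugation of a holomorphic function precomposed with conjugation is holomorphic. -/
lemma hasDerivAt_conj_conj {h : ℂ → ℂ} {d z : ℂ}
    (hh : HasDerivAt h d ((starRingEnd ℂ) z)) :
    HasDerivAt (fun w => (starRingEnd ℂ) (h ((starRingEnd ℂ) w))) ((starRingEnd ℂ) d) z := by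
  rw [hasDerivAt_iff_isLittleO] at hh ⊢
  have hconj : Filter.Tendsto (fun w : ℂ => (starRingEnd ℂ) w) (nhds z)
      (nhds ((starRingEnd ℂ) z)) := by
    have : Continuous (fun w : ℂ => (starRingEnd ℂ) w) := continuous_star
    exact this.tendsto z
  have h2 := hh.comp_tendsto hconj
  rw [Asymptotics.isLittleO_iff] at h2 ⊢
  intro ε hε
  filter_upwards [h2 hε] with w hw
  have e : (starRingEnd ℂ) (h ((starRingEnd ℂ) w)) - (starRingEnd ℂ) (h ((starRingEnd ℂ) z))
        - (w - z) • (starRingEnd ℂ) d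
      = (starRingEnd ℂ) (h ((starRingEnd ℂ) w) - h ((starRingEnd ℂ) z)
        - ((starRingEnd ℂ) w - (starRingEnd ℂ) z) • d) := by
    simp only [map_sub, smul_eq_mul, map_mul, Complex.conj_conj]
  rw [e, RCLike.norm_conj]
  have e2 : ‖(starRingEnd ℂ) w - (starRingEnd ℂ) z‖ = ‖w - z‖ := by
    rw [← map_sub, RCLike.norm_conj]
  calc ‖h ((starRingEnd ℂ) w) - h ((starRingEnd ℂ) z) - ((starRingEnd ℂ) w - (starRingEnd ℂ) z) • d‖
      ≤ ε * ‖(starRingEnd ℂ) w - (starRingEnd ℂ) z‖ := hw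
    _ = ε * ‖w - z‖ := by rw [e2]

lemma diff_conj_reflect {f : ℂ → ℂ} {z : ℂ} (hz : z ≠ 0)
    (hf : DifferentiableAt ℂ f (((starRingEnd ℂ) z)⁻¹)) :
    DifferentiableAt ℂ (fun w => (starRingEnd ℂ) (f (((starRingEnd ℂ) w)⁻¹))) z := by
  have hK : DifferentiableAt ℂ (fun v => (starRingEnd ℂ) (f ((starRingEnd ℂ) v))) z⁻¹ := by
    have : ((starRingEnd ℂ) z⁻¹) = ((starRingEnd ℂ) z)⁻¹ := map_inv₀ _ z
    rw [← this] at hf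
    exact (hasDerivAt_conj_conj hf.hasDerivAt).differentiableAt
  have hinv : DifferentiableAt ℂ (fun w : ℂ => w⁻¹) z := differentiableAt_inv hz
  have := hK.comp z hinv
  have heq : (fun w => (starRingEnd ℂ) (f (((starRingEnd ℂ) w)⁻¹)))
      = (fun v => (starRingEnd ℂ) (f ((starRingEnd ℂ) v))) ∘ (fun w : ℂ => w⁻¹) := by
    funext w
    simp [Function.comp, map_inv₀]
  rwa [heq]

/-- If a holomorphic function on a ball has vanishing real part on a nonempty open subset,
its real part vanishes on the whole ball. -/
lemma re_zero_spread {φ : ℂ → ℂ} {c : ℂ} {r : ℝ}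
    (hφ : ∀ z ∈ Metric.ball c r, DifferentiableAt ℂ φ z) {O : Set ℂ}
    (hO : IsOpen O) (hOne : O.Nonempty) (hOsub : O ⊆ Metric.ball c r)
    (hRe : ∀ z ∈ O, (φ z).re = 0) : ∀ z ∈ Metric.ball c r, (φ z).re = 0 := by
  obtain ⟨a₀, ha₀⟩ := hOne
  -- Step 1: deriv φ vanishes on O
  have hder0 : ∀ a ∈ O, deriv φ a = 0 := by
    intro a ha
    have haball := hOsub ha
    have hd : HasDerivAt φ (deriv φ a) a := (hφ a haball).hasDerivAt
    set d := deriv φ a with hd_def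
    have hmemO : ∀ᶠ w in nhds (0 : ℂ), a + w ∈ O := by
      have hcont : Filter.Tendsto (fun w : ℂ => a + w) (nhds 0) (nhds a) := by
        have : Continuous (fun w : ℂ => a + w) := by continuity
        simpa using this.tendsto 0
      exact hcont.eventually (hO.mem_nhds ha)
    -- real direction
    have h1 : HasDerivAt (fun w : ℂ => φ (a + w)) d (0 : ℂ) := by
      have hinner : HasDerivAt (fun w : ℂ => a + w) 1 (0 : ℂ) := by
        simpa using (hasDerivAt_id (0 : ℂ)).const_add a
      have := HasDerivAt.comp (0 : ℂ) (by simpa using hd) hinner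
      simpa [Function.comp_def] using this
    have h1r : HasDerivAt (fun t : ℝ => (φ (a + (t : ℂ))).re) d.re 0 := by
      simpa using h1.real_of_complex
    have hev1 : (fun t : ℝ => (φ (a + (t : ℂ))).re) =ᶠ[nhds (0:ℝ)] (fun _ => (0:ℝ)) := by
      have : Filter.Tendsto (fun t : ℝ => ((t : ℂ))) (nhds 0) (nhds (0 : ℂ)) := by
        simpa using Complex.continuous_ofReal.tendsto 0
      filter_upwards [this.eventually hmemO] with t ht
      exact hRe _ ht
    have hre0 : d.re = 0 := by
      have := h1r.deriv
      rw [Filter.EventuallyEq.deriv_eq hev1] at this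
      simpa using this.symm
    -- imaginary direction
    have h2 : HasDerivAt (fun w : ℂ => φ (a + w * Complex.I)) (d * Complex.I) (0 : ℂ) := by
      have hinner : HasDerivAt (fun w : ℂ => a + w * Complex.I) Complex.I (0 : ℂ) := by
        simpa using ((hasDerivAt_id (0 : ℂ)).mul_const Complex.I).const_add a
      have := HasDerivAt.comp (0 : ℂ) (by simpa using hd) hinner
      simpa [mul_comm, Function.comp_def] using this
    have h2r : HasDerivAt (fun t : ℝ => (φ (a + (t : ℂ) * Complex.I)).re) (d * Complex.I).re 0 := by
      simpa using h2.real_of_complex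
    have hev2 : (fun t : ℝ => (φ (a + (t : ℂ) * Complex.I)).re) =ᶠ[nhds (0:ℝ)] (fun _ => (0:ℝ)) := by
      have htend : Filter.Tendsto (fun t : ℝ => ((t : ℂ)) * Complex.I) (nhds 0) (nhds (0 : ℂ)) := by
        have : Continuous (fun t : ℝ => ((t : ℂ)) * Complex.I) := by continuity
        simpa using this.tendsto 0
      filter_upwards [htend.eventually hmemO] with t ht
      exact hRe _ ht
    have him0 : d.im = 0 := by
      have := h2r.deriv
      rw [Filter.EventuallyEq.deriv_eq hev2] at this
      simp only [Complex.mul_re, Complex.I_re, Complex.I_im] at this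
      simpa [hre0] using this.symm
    exact Complex.ext (by simpa using hre0) (by simpa using him0)
  -- Step 2: identity theorem, deriv φ = 0 on the ball
  have hball0 : Metric.ball c r ⊆ O ∪ Metric.ball c r := by intro x hx; exact Or.inr hx
  have hφan : AnalyticOnNhd ℂ φ (Metric.ball c r) := by
    have : DifferentiableOn ℂ φ (Metric.ball c r) := fun y hy => (hφ y hy).differentiableWithinAt
    exact this.analyticOnNhd Metric.isOpen_ball
  have hderan : AnalyticOnNhd ℂ (deriv φ) (Metric.ball c r) := hφan.deriv
  have hfreq : ∃ᶠ z in nhdsWithin a₀ {a₀}ᶜ, deriv φ z = 0 := by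
    apply Filter.Eventually.frequently
    filter_upwards [nhdsWithin_le_nhds (hO.mem_nhds ha₀)] with y hy
    exact hder0 y hy
  have hderiv_zero : ∀ z ∈ Metric.ball c r, deriv φ z = 0 :=
    fun z hz => hderan.eqOn_zero_of_preconnected_of_frequently_eq_zero
      (convex_ball c r).isPreconnected (hOsub ha₀) hfreq hz
  -- Step 3: φ is constant on the ball
  have hconst : ∀ z ∈ Metric.ball c r, φ z = φ a₀ := by
    intro z hz
    refine (convex_ball c r).is_const_of_fderivWithin_eq_zero
      (fun y hy => (hφ y hy).restrictScalars ℝ |>.differentiableWithinAt) ?_ hz (hOsub ha₀)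
    intro y hy
    rw [fderivWithin_of_isOpen Metric.isOpen_ball hy]
    have h1 : HasDerivAt φ 0 y := by
      have := (hφ y hy).hasDerivAt
      rwa [hderiv_zero y hy] at this
    have h2 := (h1.hasFDerivAt).restrictScalars ℝ
    rw [h2.fderiv]
    ext v
    simp
  intro z hz
  rw [hconst z hz]
  exact hRe a₀ ha₀

lemma circleInv_ne_zero {z : ℂ} (hz : z ≠ 0) : circleInv z ≠ 0 := by
  rw [circleInv_eq z hz]
  simp [hz]

lemma circleInv_circleInv {z : ℂ} (hz : z ≠ 0) : circleInv (circleInv z) = z := by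
  rw [circleInv_eq z hz, circleInv_eq _ (by rw [← circleInv_eq z hz]; exact circleInv_ne_zero hz)]
  simp

lemma circleInv_of_norm_one {z : ℂ} (hz : ‖z‖ = 1) : circleInv z = z := by
  rw [circleInv, hz]
  simp

lemma continuousAt_circleInv {z : ℂ} (hz : z ≠ 0) : ContinuousAt circleInv z := by
  have h1 : ContinuousAt (fun w : ℂ => ((starRingEnd ℂ) w)⁻¹) z := by
    apply ContinuousAt.inv₀
    · exact continuous_star.continuousAt
    · simpa using hz
  apply h1.congr
  have hne : {w : ℂ | w ≠ 0} ∈ nhds z := by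
    exact isOpen_ne.mem_nhds hz
  filter_upwards [hne] with w hw
  exact (circleInv_eq w hw).symm

/-- Shrinking lemma: a small ball around `z₁` avoiding `0` whose inversion lands in a
given ball around `circleInv z₁`. -/
lemma shrink_ball {z₁ : ℂ} (hz₁ : z₁ ≠ 0) {r₁ r₂ : ℝ} (hr₁ : 0 < r₁) (hr₂ : 0 < r₂) :
    ∃ ρ > 0, Metric.ball z₁ ρ ⊆ Metric.ball z₁ r₁ ∧
      ∀ y ∈ Metric.ball z₁ ρ, y ≠ 0 ∧ circleInv y ∈ Metric.ball (circleInv z₁) r₂ := by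
  have hW : Metric.ball z₁ r₁ ∩ (circleInv ⁻¹' Metric.ball (circleInv z₁) r₂) ∩ {w : ℂ | w ≠ 0}
      ∈ nhds z₁ := by
    refine Filter.inter_mem (Filter.inter_mem ?_ ?_) ?_
    · exact Metric.ball_mem_nhds z₁ hr₁
    · exact (continuousAt_circleInv hz₁).preimage_mem_nhds
        (Metric.ball_mem_nhds _ hr₂)
    · exact isOpen_ne.mem_nhds hz₁
  obtain ⟨ρ, hρ, hsub⟩ := Metric.mem_nhds_iff.1 hW
  refine ⟨ρ, hρ, ?_, ?_⟩
  · intro y hy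
    exact (hsub hy).1.1
  · intro y hy
    exact ⟨(hsub hy).2, (hsub hy).1.2⟩

lemma assemble {u : ℂ → ℝ} {f h : ℂ → ℂ} {z₁ : ℂ} {r₁ r₂ ρ : ℝ}
    (hsub₁ : Metric.ball z₁ ρ ⊆ Metric.ball z₁ r₁)
    (hyprop : ∀ y ∈ Metric.ball z₁ ρ, y ≠ 0 ∧ circleInv y ∈ Metric.ball (circleInv z₁) r₂)
    (hdf : ∀ y ∈ Metric.ball z₁ r₁, DifferentiableAt ℂ f y)
    (hrf : ∀ y ∈ Metric.ball z₁ r₁, u y = (f y).re)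
    (hdh : ∀ y ∈ Metric.ball (circleInv z₁) r₂, DifferentiableAt ℂ h y)
    (hrh : ∀ y ∈ Metric.ball (circleInv z₁) r₂, u y = (h y).re) :
    (∀ y ∈ Metric.ball z₁ ρ, DifferentiableAt ℂ
        (fun w => f w + (starRingEnd ℂ) (h (((starRingEnd ℂ) w)⁻¹))) y) ∧
    (∀ y ∈ Metric.ball z₁ ρ, (f y + (starRingEnd ℂ) (h (((starRingEnd ℂ) y)⁻¹))).re
        = u y + u (circleInv y)) := by
  constructor
  · intro y hy
    obtain ⟨hy0, hyinv⟩ := hyprop y hy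
    refine (hdf y (hsub₁ hy)).add ?_
    apply diff_conj_reflect hy0
    rw [← circleInv_eq y hy0]
    exact hdh _ hyinv
  · intro y hy
    obtain ⟨hy0, hyinv⟩ := hyprop y hy
    rw [Complex.add_re, ← circleInv_eq y hy0, Complex.conj_re]
    rw [← hrf y (hsub₁ hy), ← hrh _ hyinv]


/-- Schwarz reflection principle across the unit circle. -/
theorem schwarz_reflection_circle
    (U : Set ℂ) (hU0 : U ⊆ {z : ℂ | z ≠ 0}) (hUopen : IsOpen U)
    (hUconn : IsConnected U) (hUsym : circleInv '' U = U)
    (hUcirc : ∃ z ∈ U, ‖z‖ = 1)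
    (u : ℂ → ℝ) (hu : ContDiffOn ℝ 2 u U)
    (hharm : ∀ z ∈ U, pdx (pdx u) z + pdy (pdy u) z = 0)
    (hzero : ∀ z ∈ U, ‖z‖ = 1 → u z = 0) :
    ∀ z ∈ U, u z = -u (circleInv z) := by
  set S : Set ℂ := {z : ℂ | ∀ᶠ y in nhds z, u y + u (circleInv y) = 0} with hSdef
  have hSopen : IsOpen S := isOpen_setOf_eventually_nhds
  have hιU : ∀ z ∈ U, circleInv z ∈ U := by
    intro z hz
    rw [← hUsym]
    exact Set.mem_image_of_mem _ hz
  -- Step 1: a circle point belongs to S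
  obtain ⟨z₀, hz₀U, hz₀n⟩ := hUcirc
  have hz₀0 : z₀ ≠ 0 := hU0 hz₀U
  have hz₀inv : circleInv z₀ = z₀ := circleInv_of_norm_one hz₀n
  obtain ⟨r₁, hr₁, hb₁, f, hdf, hrf⟩ := local_rep hUopen hu hharm hz₀U
  obtain ⟨ρ, hρ, hsub₁, hyprop⟩ := shrink_ball hz₀0 hr₁ hr₁
  have hyprop' : ∀ y ∈ Metric.ball z₀ ρ, y ≠ 0 ∧
      circleInv y ∈ Metric.ball (circleInv z₀) r₁ := hyprop
  have hdh : ∀ y ∈ Metric.ball (circleInv z₀) r₁, DifferentiableAt ℂ f y := by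
    rw [hz₀inv]; exact hdf
  have hrh : ∀ y ∈ Metric.ball (circleInv z₀) r₁, u y = (f y).re := by
    rw [hz₀inv]; exact hrf
  obtain ⟨hdφ, hreφ⟩ := assemble hsub₁ hyprop' hdf hrf hdh hrh
  -- the sequence of circle points converging to z₀
  have hseq : ∃ᶠ y in nhdsWithin z₀ {z₀}ᶜ,
      f y + (starRingEnd ℂ) (f (((starRingEnd ℂ) y)⁻¹)) = 0 := by
    set seq : ℕ → ℂ := fun n => Complex.exp (((1 / (n + 1) : ℝ) : ℂ) * Complex.I) * z₀ with hseqdef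
    have htends : Filter.Tendsto seq Filter.atTop (nhds z₀) := by
      have h0 : Filter.Tendsto (fun n : ℕ => (1 / (n + 1) : ℝ)) Filter.atTop (nhds 0) :=
        tendsto_one_div_add_atTop_nhds_zero_nat
      have h1 : Filter.Tendsto (fun n : ℕ => ((1 / (n + 1) : ℝ) : ℂ) * Complex.I)
          Filter.atTop (nhds 0) := by
        have := (Complex.continuous_ofReal.tendsto 0).comp h0
        have h2 := this.mul_const Complex.I
        simpa using h2
      have h3 := (Complex.continuous_exp.tendsto 0).comp h1
      have h4 := h3.mul_const z₀
      rw [Complex.exp_zero, one_mul] at h4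
      exact h4
    have hne : ∀ n : ℕ, seq n ≠ z₀ := by
      intro n hcon
      have h1 : Complex.exp (((1 / (n + 1) : ℝ) : ℂ) * Complex.I) = 1 := by
        have hmul : Complex.exp (((1 / (n + 1) : ℝ) : ℂ) * Complex.I) * z₀ = 1 * z₀ := by
          rw [one_mul]; exact hcon
        exact mul_right_cancel₀ hz₀0 hmul
      rw [Complex.exp_eq_one_iff] at h1
      obtain ⟨k, hk⟩ := h1
      have hI : (Complex.I : ℂ) ≠ 0 := Complex.I_ne_zero
      have h2 : ((1 / (n + 1) : ℝ) : ℂ) = (k : ℂ) * (2 * Real.pi) := by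
        have := hk
        rw [show (k : ℂ) * (2 * Real.pi * Complex.I) = ((k : ℂ) * (2 * Real.pi)) * Complex.I by ring] at this
        exact mul_right_cancel₀ hI this
      have h3 : (1 / (n + 1) : ℝ) = (k : ℝ) * (2 * Real.pi) := by
        exact_mod_cast h2
      have hpos : (0 : ℝ) < 1 / (n + 1) := by positivity
      have hle : (1 / (n + 1) : ℝ) ≤ 1 := by
        rw [div_le_one (by positivity)]
        linarith [Nat.cast_nonneg (α := ℝ) n]
      have hπ : (3 : ℝ) < Real.pi := Real.pi_gt_three
      rcases lt_trichotomy k 0 with hkneg | hk0 | hkpos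
      · have : (k : ℝ) ≤ -1 := by exact_mod_cast Int.le_sub_one_of_lt hkneg
        nlinarith
      · rw [hk0] at h3; simp at h3; linarith
      · have : (1 : ℝ) ≤ (k : ℝ) := by exact_mod_cast hkpos
        nlinarith
    have htends' : Filter.Tendsto seq Filter.atTop (nhdsWithin z₀ {z₀}ᶜ) := by
      rw [tendsto_nhdsWithin_iff]
      exact ⟨htends, Filter.Eventually.of_forall (fun n => hne n)⟩
    apply htends'.frequently
    apply Filter.Eventually.frequently
    filter_upwards [htends.eventually (Metric.ball_mem_nhds z₀ hρ)] with n hn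
    have hnormn : ‖seq n‖ = 1 := by
      rw [hseqdef]
      simp only [norm_mul, hz₀n, mul_one]
      exact Complex.norm_exp_ofReal_mul_I _
    have hyU : seq n ∈ U := hb₁ (hsub₁ hn)
    have hu0 : u (seq n) = 0 := hzero _ hyU hnormn
    have hinv : circleInv (seq n) = seq n := circleInv_of_norm_one hnormn
    have hne0 : seq n ≠ 0 := (hyprop' _ hn).1
    rw [← circleInv_eq _ hne0, hinv, Complex.add_conj]
    rw [← hrf _ (hsub₁ hn), hu0]
    simp
  have hφan : AnalyticOnNhd ℂ (fun w => f w + (starRingEnd ℂ) (f (((starRingEnd ℂ) w)⁻¹)))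
      (Metric.ball z₀ ρ) := by
    have : DifferentiableOn ℂ (fun w => f w + (starRingEnd ℂ) (f (((starRingEnd ℂ) w)⁻¹)))
        (Metric.ball z₀ ρ) := fun y hy => (hdφ y hy).differentiableWithinAt
    exact this.analyticOnNhd Metric.isOpen_ball
  have hφ0 : ∀ y ∈ Metric.ball z₀ ρ,
      f y + (starRingEnd ℂ) (f (((starRingEnd ℂ) y)⁻¹)) = 0 :=
    fun y hy => hφan.eqOn_zero_of_preconnected_of_frequently_eq_zero
      (convex_ball z₀ ρ).isPreconnected (Metric.mem_ball_self hρ) hseq hy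
  have hz₀S : z₀ ∈ S := by
    rw [hSdef]
    filter_upwards [Metric.ball_mem_nhds z₀ hρ] with y hy
    rw [← hreφ y hy, hφ0 y hy]
    simp
  -- Step 2: closedness
  have hclosed : ∀ z₁ ∈ U, z₁ ∈ closure (U ∩ S) → z₁ ∈ S := by
    intro z₁ hz₁U hz₁cl
    have hz₁0 : z₁ ≠ 0 := hU0 hz₁U
    have hι₁U : circleInv z₁ ∈ U := hιU z₁ hz₁U
    obtain ⟨s₁, hs₁, hsb₁, g₁, hdg₁, hrg₁⟩ := local_rep hUopen hu hharm hz₁U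
    obtain ⟨s₂, hs₂, hsb₂, g₂, hdg₂, hrg₂⟩ := local_rep hUopen hu hharm hι₁U
    obtain ⟨ρ₁, hρ₁, hsubb, hyprops⟩ := shrink_ball hz₁0 hs₁ hs₂
    obtain ⟨hdψ, hreψ⟩ := assemble hsubb hyprops hdg₁ hrg₁ hdg₂ hrg₂
    obtain ⟨a, haball, haUS⟩ := _root_.mem_closure_iff.1 hz₁cl
      (Metric.ball z₁ ρ₁) Metric.isOpen_ball (Metric.mem_ball_self hρ₁)
    obtain ⟨t, htprop, htopen, hat⟩ := eventually_nhds_iff.1 haUS.2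
    set O : Set ℂ := t ∩ Metric.ball z₁ ρ₁ with hOdef
    have hO : IsOpen O := htopen.inter Metric.isOpen_ball
    have hOne : O.Nonempty := ⟨a, hat, haball⟩
    have hOsub : O ⊆ Metric.ball z₁ ρ₁ := Set.inter_subset_right
    have hOre : ∀ y ∈ O,
        ((g₁ y + (starRingEnd ℂ) (g₂ (((starRingEnd ℂ) y)⁻¹))) : ℂ).re = 0 := by
      intro y hy
      rw [hreψ y hy.2]
      exact htprop y hy.1
    have hspread := re_zero_spread hdψ hO hOne hOsub hOre
    rw [hSdef]
    filter_upwards [Metric.ball_mem_nhds z₁ hρ₁] with y hy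
    rw [← hreψ y hy]
    exact hspread y hy
  -- Step 3: connectedness
  have hUS : U ⊆ S := by
    have hP := hUconn.isPreconnected
    by_contra hcon
    have hV2 : (U ∩ (closure (U ∩ S))ᶜ).Nonempty := by
      rw [Set.not_subset] at hcon
      obtain ⟨z, hzU, hzS⟩ := hcon
      refine ⟨z, hzU, ?_⟩
      intro hzcl
      exact hzS (hclosed z hzU hzcl)
    have hV1 : (U ∩ S).Nonempty := ⟨z₀, hz₀U, hz₀S⟩
    have hcover : U ⊆ S ∪ (closure (U ∩ S))ᶜ := by
      intro z hzU
      by_cases hzcl : z ∈ closure (U ∩ S)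
      · exact Or.inl (hclosed z hzU hzcl)
      · exact Or.inr hzcl
    have := hP S (closure (U ∩ S))ᶜ hSopen (isClosed_closure.isOpen_compl) hcover hV1 hV2
    obtain ⟨z, hzU, hzS, hzcl⟩ := this
    exact hzcl (subset_closure ⟨hzU, hzS⟩)
  intro z hzU
  have hz : u z + u (circleInv z) = 0 := (hUS hzU).self_of_nhds
  linarith
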